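/- If 𝐗 = (X; Y) is a frame for a Lagrangian subspace of ℝ^{2n}, then the complex n×n matrices X + iY and X − iY are both invertible. -/

import Mathlib

open Matrix

noncomputable section

/-- The standard symplectic matrix `J = [[0, -I],[I, 0]]` on `ℝ^{2n}`,
with `ℝ^{2n}` modeled as `Fin n ⊕ Fin n → ℝ`. -/
def Jmat (n : ℕ) : Matrix (Fin n ⊕ Fin n) (Fin n ⊕ Fin n) ℝ :=
  Matrix.fromBlocks 0 (-1) 1 0

/-- A subspace `ℓ ⊆ ℝ^{2n}` is Lagrangian if it has dimension `n` and
`(Jx, y) = 0` for all `x, y ∈ ℓ`. -/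
def IsLagrangian (n : ℕ) (ℓ : Submodule ℝ (Fin n ⊕ Fin n → ℝ)) : Prop :=
  Module.finrank ℝ ℓ = n ∧ ∀ x ∈ ℓ, ∀ y ∈ ℓ, (Jmat n).mulVec x ⬝ᵥ y = 0

/-- A `2n × n` matrix `M` is a frame for the subspace `ℓ ⊆ ℝ^{2n}` if its
columns are linearly independent and span `ℓ` (i.e. form a basis of `ℓ`). -/
def IsFrameOf (n : ℕ) (M : Matrix (Fin n ⊕ Fin n) (Fin n) ℝ)
    (ℓ : Submodule ℝ (Fin n ⊕ Fin n → ℝ)) : Prop :=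
  LinearIndependent ℝ (fun j : Fin n => fun i => M i j) ∧
    Submodule.span ℝ (Set.range (fun j : Fin n => fun i => M i j)) = ℓ

/-- The `2n × n` matrix `𝐗 = (X; Y)` with `n × n` blocks `X` and `Y` stacked
vertically. -/
def vframe {n : ℕ} (X Y : Matrix (Fin n) (Fin n) ℝ) :
    Matrix (Fin n ⊕ Fin n) (Fin n) ℝ :=
  Matrix.fromRows X Y

/-- The complex matrix `X + iY` built from real matrices `X` and `Y`. -/
def cplx {n : ℕ} (X Y : Matrix (Fin n) (Fin n) ℝ) : Matrix (Fin n) (Fin n) ℂ :=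
  X.map (fun a => (a : ℂ)) + Complex.I • Y.map (fun a => (a : ℂ))

end
/-- For a Lagrangian frame `(X; Y)`, the complex matrices
`X + iY` and `X - iY` are invertible. -/
theorem lagrangian_frame_cplx_invertible (n : ℕ) (X Y : Matrix (Fin n) (Fin n) ℝ)
    (ℓ : Submodule ℝ (Fin n ⊕ Fin n → ℝ)) (hℓ : IsLagrangian n ℓ)
    (hf : IsFrameOf n (vframe X Y) ℓ) :
    IsUnit (cplx X Y) ∧ IsUnit (cplx X (-Y)) := by
  classical
  -- columns are in ℓ
  have hcol : ∀ j : Fin n, (fun i => vframe X Y i j) ∈ ℓ := by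
    intro j
    rw [← hf.2]
    exact Submodule.subset_span ⟨j, rfl⟩
  -- symmetry: Xᵀ * Y = Yᵀ * X
  have hsym : Xᵀ * Y = Yᵀ * X := by
    ext j k
    have h := hℓ.2 _ (hcol j) _ (hcol k)
    have hcolj : (fun i => vframe X Y i j) =
        Sum.elim (fun i => X i j) (fun i => Y i j) := by
      funext i; cases i <;> rfl
    have hcolk : (fun i => vframe X Y i k) =
        Sum.elim (fun i => X i k) (fun i => Y i k) := by
      funext i; cases i <;> rfl
    rw [hcolj, hcolk, Jmat, fromBlocks_mulVec] at h
    simp only [Matrix.zero_mulVec, Matrix.neg_mulVec, Matrix.one_mulVec,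
      zero_add, add_zero, dotProduct, Fintype.sum_sum_type, Sum.elim_inl,
      Sum.elim_inr, Pi.neg_apply, Function.comp] at h
    have e1 : ∑ x : Fin n, -Y x j * X x k = -∑ x : Fin n, Y x j * X x k := by
      simp [neg_mul]
    rw [e1] at h
    simp only [Matrix.mul_apply, Matrix.transpose_apply]
    linarith [h]
  -- injectivity of mulVec of the frame
  have hinj : ∀ v : Fin n → ℝ, (vframe X Y) *ᵥ v = 0 → v = 0 := by
    intro v hv
    have := Fintype.linearIndependent_iff.mp hf.1 v ?_
    · funext j; exact this j
    · funext i
      have := congrFun hv i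
      simpa [Matrix.mulVec, dotProduct, mul_comm] using this
  -- the Gram matrix is a unit
  set A : Matrix (Fin n) (Fin n) ℝ := Xᵀ * X + Yᵀ * Y with hA
  have hXYv : ∀ v : Fin n → ℝ, A *ᵥ v = 0 → v = 0 := by
    intro v hv
    have h0 : (X *ᵥ v) ⬝ᵥ (X *ᵥ v) + (Y *ᵥ v) ⬝ᵥ (Y *ᵥ v) = 0 := by
      have := congrArg (fun w => v ⬝ᵥ w) hv
      simpa [hA, Matrix.add_mulVec, dotProduct_add, Matrix.mulVec_mulVec,
        ← Matrix.mulVec_mulVec, dotProduct_mulVec, vecMul_transpose] using this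
    have hnn : ∀ w : Fin n → ℝ, 0 ≤ w ⬝ᵥ w := fun w =>
      Finset.sum_nonneg fun i _ => mul_self_nonneg _
    have hX : X *ᵥ v = 0 := by
      rw [← dotProduct_self_eq_zero (v := X *ᵥ v)]
      nlinarith [hnn (X *ᵥ v), hnn (Y *ᵥ v)]
    have hY : Y *ᵥ v = 0 := by
      rw [← dotProduct_self_eq_zero (v := Y *ᵥ v)]
      nlinarith [hnn (X *ᵥ v), hnn (Y *ᵥ v)]
    apply hinj
    funext i
    cases i with
    | inl i => simpa [vframe, Matrix.mulVec, dotProduct, Matrix.fromRows_apply_inl]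
        using congrFun hX i
    | inr i => simpa [vframe, Matrix.mulVec, dotProduct, Matrix.fromRows_apply_inr]
        using congrFun hY i
  have hAunit : IsUnit A := by
    rw [← Matrix.mulVec_injective_iff_isUnit]
    intro u w huw
    have : A *ᵥ (u - w) = 0 := by
      rw [Matrix.mulVec_sub, huw, sub_self]
    have := hXYv _ this
    exact sub_eq_zero.mp this
  -- Gram identity over ℂ
  set c : ℝ →+* ℂ := algebraMap ℝ ℂ with hc
  have hmapc : ∀ Z : Matrix (Fin n) (Fin n) ℝ,
      Z.map (fun a => (a : ℂ)) = Z.map c := fun _ => rfl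
  have hgram : (cplx X Y)ᴴ * (cplx X Y) = A.map c := by
    have hsymc : (Xᵀ).map c * Y.map c = (Yᵀ).map c * X.map c := by
      rw [← Matrix.map_mul, ← Matrix.map_mul, hsym]
    simp only [cplx, hmapc, conjTranspose_add, conjTranspose_smul,
      Complex.star_def, Complex.conj_I]
    have h1 : (X.map c)ᴴ = (Xᵀ).map c := by
      ext i j; simp [conjTranspose_apply, hc]
    have h2 : (Y.map c)ᴴ = (Yᵀ).map c := by
      ext i j; simp [conjTranspose_apply, hc]
    rw [h1, h2, hA]
    show _ = c.mapMatrix (Xᵀ * X + Yᵀ * Y)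
    rw [map_add c.mapMatrix, _root_.map_mul c.mapMatrix, _root_.map_mul c.mapMatrix]
    simp only [RingHom.mapMatrix_apply]
    simp only [Matrix.add_mul, Matrix.mul_add, Matrix.smul_mul, Matrix.mul_smul,
      smul_smul, neg_mul, Complex.I_mul_I, neg_neg, one_smul, neg_smul, smul_add]
    rw [hsymc]
    have hI : Complex.I • -(Complex.I • (Yᵀ.map ⇑c * Y.map ⇑c))
        = Yᵀ.map ⇑c * Y.map ⇑c := by
      rw [smul_neg, smul_smul]
      norm_num [Complex.I_mul_I]
    rw [hI]
    abel
  have hdetA : A.det ≠ 0 := (Matrix.isUnit_iff_isUnit_det A |>.mp hAunit).ne_zero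
  have hdetM : (cplx X Y).det ≠ 0 := by
    intro h
    have : ((cplx X Y)ᴴ * (cplx X Y)).det = 0 := by
      rw [Matrix.det_mul, h, mul_zero]
    rw [hgram, show A.map ⇑c = c.mapMatrix A from rfl, ← RingHom.map_det] at this
    rw [hc] at this
    exact hdetA (Complex.ofReal_eq_zero.mp this)
  have hM : IsUnit (cplx X Y) := by
    rw [Matrix.isUnit_iff_isUnit_det]
    exact isUnit_iff_ne_zero.mpr hdetM
  refine ⟨hM, ?_⟩
  have heq : cplx X (-Y) = ((cplx X Y)ᴴ)ᵀ := by
    ext i j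
    simp [cplx, conjTranspose_apply, Complex.star_def, sub_eq_add_neg]
  rw [heq, Matrix.isUnit_iff_isUnit_det, Matrix.det_transpose, Matrix.det_conjTranspose]
  exact isUnit_iff_ne_zero.mpr (by simpa using star_ne_zero.mpr hdetM)
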